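/- Consider a fair-division instance with n agents and exactly m = n indivisible goods, and let A be a balanced allocation (i.e., A assigns exactly one good to each agent). Then there exists an allocation B that is producible by the round-robin algorithm for some ordering of the agents and some tie-breaking, such that B weakly dominates A, i.e., u_i(B_i) ≥ u_i(A_i) for every agent i. -/

import Mathlib

open Finset

/-- The bundle of goods assigned to agent `i` by allocation `f`
(an allocation maps each good to the agent receiving it). -/
def bundle {n m : ℕ} (f : Fin m → Fin n) (i : Fin n) : Finset (Fin m) :=
  Finset.univ.filter (fun g => f g = i)

/-- The (additive) utility of agent `i` for her own bundle under allocation `f`. -/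
def util {n m : ℕ} (u : Fin n → Fin m → ℝ) (f : Fin m → Fin n) (i : Fin n) : ℝ :=
  ∑ g ∈ bundle f i, u i g

/-- Egalitarian welfare: the minimum utility over all agents. -/
noncomputable def egalWelfare {n m : ℕ} (u : Fin n → Fin m → ℝ) (f : Fin m → Fin n) : ℝ :=
  ⨅ i : Fin n, util u f i

/-- Maximum egalitarian welfare of the instance, over all allocations. -/
noncomputable def maxEgalWelfare {n m : ℕ} (u : Fin n → Fin m → ℝ) : ℝ :=
  ⨆ f : Fin m → Fin n, egalWelfare u f

/-- `IsRoundRobin hn u f` holds when the allocation `f` is producible by the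
round-robin algorithm: there is an ordering `σ` of the agents and a bijective
sequence `pick` of picks such that on turn `t` the agent `σ (t mod n)` takes a
good of maximum utility (to her) among the goods not yet picked, receiving it
in `f`. -/
def IsRoundRobin {n m : ℕ} (hn : 0 < n) (u : Fin n → Fin m → ℝ)
    (f : Fin m → Fin n) : Prop :=
  ∃ σ : Fin n → Fin n, Function.Bijective σ ∧
    ∃ pick : Fin m → Fin m, Function.Bijective pick ∧
      ∀ t : Fin m,
        f (pick t) = σ ⟨t.val % n, Nat.mod_lt _ hn⟩ ∧
        ∀ g : Fin m, (∀ s : Fin m, s < t → pick s ≠ g) →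
          u (σ ⟨t.val % n, Nat.mod_lt _ hn⟩) g ≤
            u (σ ⟨t.val % n, Nat.mod_lt _ hn⟩) (pick t)

/-- For an instance with `n` agents and exactly `n` goods, any balanced allocation
(i.e. a bijection assigning one good to each agent) is weakly dominated by some
allocation producible by the round-robin algorithm. -/
lemma util_equiv {n : ℕ} (u : Fin n → Fin n → ℝ) (e : Fin n ≃ Fin n) (i : Fin n) :
    util u (⇑e) i = u i (e.symm i) := by
  have hb : bundle (⇑e) i = {e.symm i} := by
    ext g
    simp [bundle, Equiv.apply_eq_iff_eq_symm_apply]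
  rw [util, hb, Finset.sum_singleton]

lemma exists_pickable {n : ℕ} (u : Fin n → Fin n → ℝ) (C : Fin n → Fin n)
    (hmax : ∀ C' : Fin n → Fin n, Function.Bijective C' →
      (∀ i, u i (C i) ≤ u i (C' i)) → ∑ i, u i (C' i) ≤ ∑ i, u i (C i))
    (R : Finset (Fin n)) (hR : R.Nonempty) (hC : Function.Bijective C) :
    ∃ i ∈ R, ∀ j ∈ R, u i (C j) ≤ u i (C i) := by
  classical
  by_contra hcon
  push_neg at hcon
  choose φ0 hφ0R hφ0 using hcon
  set φ : Fin n → Fin n := fun i => if h : i ∈ R then φ0 i h else i with hφdef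
  have hφR : ∀ i ∈ R, φ i ∈ R := by
    intro i hi; simp only [hφdef, dif_pos hi]; exact hφ0R i hi
  have hφlt : ∀ i ∈ R, u i (C i) < u i (C (φ i)) := by
    intro i hi; simp only [hφdef, dif_pos hi]; exact hφ0 i hi
  obtain ⟨i₀, hi₀⟩ := hR
  have hiter : ∀ t, φ^[t] i₀ ∈ R := by
    intro t; induction t with
    | zero => simpa
    | succ t ih => rw [Function.iterate_succ_apply']; exact hφR _ ih
  obtain ⟨a, b, hab, heqab⟩ := Fintype.exists_ne_map_eq_of_card_lt
    (fun t : Fin (n+1) => φ^[t.val] i₀) (by simp)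
  have key : ∃ p q : ℕ, p < q ∧ φ^[p] i₀ = φ^[q] i₀ := by
    rcases lt_or_gt_of_ne (Fin.val_injective.ne hab) with h | h
    exacts [⟨a, b, h, heqab⟩, ⟨b, a, h, heqab.symm⟩]
  obtain ⟨p, q, hpq, heq2⟩ := key
  set x := φ^[p] i₀ with hx
  set k := q - p with hk
  have hkpos : 0 < k := by omega
  have hxfix : φ^[k] x = x := by
    have hkq : k + p = q := by omega
    rw [hx, ← Function.iterate_add_apply, hkq]
    exact heq2.symm
  set O : Finset (Fin n) := (Finset.range k).image (fun j => φ^[j] x) with hO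
  have hxO : x ∈ O := Finset.mem_image.mpr ⟨0, Finset.mem_range.mpr hkpos, rfl⟩
  have hOR : ∀ i ∈ O, i ∈ R := by
    intro i hi
    obtain ⟨j, _, rfl⟩ := Finset.mem_image.mp hi
    rw [hx, ← Function.iterate_add_apply]
    exact hiter _
  have hmem : ∀ i ∈ O, φ i ∈ O := by
    intro i hi
    obtain ⟨j, hj, rfl⟩ := Finset.mem_image.mp hi
    rw [Finset.mem_range] at hj
    have h1 : φ (φ^[j] x) = φ^[j+1] x := (Function.iterate_succ_apply' φ j x).symm
    rcases eq_or_lt_of_le (Nat.succ_le_of_lt hj) with h | h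
    · have h' : j + 1 = k := by omega
      rw [h1, h', hxfix]; exact hxO
    · exact Finset.mem_image.mpr ⟨j+1, Finset.mem_range.mpr h, h1.symm⟩
  have hinvO : ∀ i ∈ O, φ^[k-1] (φ i) = i := by
    intro i hi
    obtain ⟨j, hj, rfl⟩ := Finset.mem_image.mp hi
    have h1 : φ (φ^[j] x) = φ^[j+1] x := (Function.iterate_succ_apply' φ j x).symm
    rw [h1, ← Function.iterate_add_apply]
    have h2 : k - 1 + (j + 1) = j + k := by omega
    rw [h2, Function.iterate_add_apply, hxfix]
  set ψ : Fin n → Fin n := fun i => if i ∈ O then φ i else i with hψ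
  have hψO : ∀ i ∈ O, ψ i = φ i := fun i hi => if_pos hi
  have hψn : ∀ i ∉ O, ψ i = i := fun i hi => if_neg hi
  have hψinj : Function.Injective ψ := by
    intro a b hab2
    by_cases ha : a ∈ O <;> by_cases hb : b ∈ O
    · rw [hψO a ha, hψO b hb] at hab2
      have := congrArg (φ^[k-1]) hab2
      rwa [hinvO a ha, hinvO b hb] at this
    · rw [hψO a ha, hψn b hb] at hab2
      exact absurd (hab2 ▸ hmem a ha) hb
    · rw [hψn a ha, hψO b hb] at hab2
      have : a ∈ O := by rw [hab2]; exact hmem b hb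
      exact absurd this ha
    · rwa [hψn a ha, hψn b hb] at hab2
  have hC'bij : Function.Bijective (C ∘ ψ) :=
    Finite.injective_iff_bijective.mp (hC.injective.comp hψinj)
  have hdom : ∀ i, u i (C i) ≤ u i ((C ∘ ψ) i) := by
    intro i
    by_cases hi : i ∈ O
    · have := hφlt i (hOR i hi)
      simp only [Function.comp_apply, hψO i hi]
      exact this.le
    · simp only [Function.comp_apply, hψn i hi]
      exact le_refl _
  have hlt : ∑ i, u i (C i) < ∑ i, u i ((C ∘ ψ) i) := by
    apply Finset.sum_lt_sum
    · exact fun i _ => hdom i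
    · refine ⟨x, Finset.mem_univ x, ?_⟩
      simp only [Function.comp_apply, hψO x hxO]
      exact hφlt x (hOR x hxO)
  exact absurd (hmax (C ∘ ψ) hC'bij hdom) (not_le.mpr hlt)

lemma greedy_list {n : ℕ} (u : Fin n → Fin n → ℝ) (C : Fin n → Fin n)
    (hpick : ∀ R : Finset (Fin n), R.Nonempty → ∃ i ∈ R, ∀ j ∈ R, u i (C j) ≤ u i (C i)) :
    ∀ k (R : Finset (Fin n)), R.card = k →
      ∃ L : List (Fin n), L.Nodup ∧ L.toFinset = R ∧
        ∀ (t : ℕ) (ht : t < L.length), ∀ j ∈ L.drop t,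
          u (L.get ⟨t, ht⟩) (C j) ≤ u (L.get ⟨t, ht⟩) (C (L.get ⟨t, ht⟩)) := by
  intro k
  induction k with
  | zero =>
    intro R hR
    refine ⟨[], by simp, by simpa using (Finset.card_eq_zero.mp hR).symm, ?_⟩
    intro t ht
    simp at ht
  | succ k ih =>
    intro R hR
    have hne : R.Nonempty := Finset.card_pos.mp (by omega)
    obtain ⟨i, hiR, hi⟩ := hpick R hne
    obtain ⟨L', hnd, htf, hprop⟩ := ih (R.erase i)
      (by rw [Finset.card_erase_of_mem hiR, hR]; rfl)
    refine ⟨i :: L', ?_, ?_, ?_⟩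
    · refine List.nodup_cons.mpr ⟨?_, hnd⟩
      intro hmem
      have : i ∈ R.erase i := htf ▸ List.mem_toFinset.mpr hmem
      exact (Finset.notMem_erase i R) this
    · rw [List.toFinset_cons, htf, Finset.insert_erase hiR]
    · intro t ht j hj
      cases t with
      | zero =>
        simp only [List.drop_zero] at hj
        have hjR : j ∈ R := by
          have h1 : j ∈ (i :: L').toFinset := List.mem_toFinset.mpr hj
          rwa [List.toFinset_cons, htf, Finset.insert_erase hiR] at h1
        exact hi j hjR
      | succ t =>
        have ht' : t < L'.length := by simpa using ht
        have hgeq : (i :: L').get ⟨t+1, ht⟩ = L'.get ⟨t, ht'⟩ := rfl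
        rw [hgeq]
        exact hprop t ht' j (by rwa [List.drop_succ_cons] at hj)

theorem roundRobin_dominates_balanced (n : ℕ) (hn : 0 < n)
    (u : Fin n → Fin n → ℝ) (hpos : ∀ i g, 0 ≤ u i g)
    (A : Fin n → Fin n) (hA : Function.Bijective A) :
    ∃ B : Fin n → Fin n, IsRoundRobin hn u B ∧
      ∀ i, util u A i ≤ util u B i := by
  classical
  set Ae : Fin n ≃ Fin n := Equiv.ofBijective A hA with hAe
  let S := {C : Fin n → Fin n // Function.Bijective C ∧ ∀ i, u i (Ae.symm i) ≤ u i (C i)}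
  haveI : Nonempty S := ⟨⟨⇑Ae.symm, Ae.symm.bijective, fun i => le_refl _⟩⟩
  obtain ⟨⟨C, hCbij, hCdom⟩, hCmax⟩ := Finite.exists_max (fun s : S => ∑ i, u i (s.val i))
  have hmax : ∀ C' : Fin n → Fin n, Function.Bijective C' →
      (∀ i, u i (C i) ≤ u i (C' i)) → ∑ i, u i (C' i) ≤ ∑ i, u i (C i) := by
    intro C' hb hd
    exact hCmax ⟨C', hb, fun i => le_trans (hCdom i) (hd i)⟩
  have hpick : ∀ R : Finset (Fin n), R.Nonempty →
      ∃ i ∈ R, ∀ j ∈ R, u i (C j) ≤ u i (C i) :=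
    fun R hR => exists_pickable u C hmax R hR hCbij
  obtain ⟨L, hnd, htf, hgr⟩ := greedy_list u C hpick Finset.univ.card Finset.univ rfl
  have hlen : L.length = n := by
    rw [← List.toFinset_card_of_nodup hnd, htf, Finset.card_univ, Fintype.card_fin]
  have hmemL : ∀ j : Fin n, j ∈ L := by
    intro j
    apply List.mem_toFinset.mp
    rw [htf]; exact Finset.mem_univ j
  set σ : Fin n → Fin n := fun t => L.get ⟨t.val, by rw [hlen]; exact t.isLt⟩ with hσ
  have hσinj : Function.Injective σ := by
    intro a b hab
    have h1 := (List.Nodup.get_inj_iff hnd).mp hab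
    exact Fin.ext (by simpa using congrArg Fin.val h1)
  have hσbij : Function.Bijective σ := Finite.injective_iff_bijective.mp hσinj
  set Ce : Fin n ≃ Fin n := Equiv.ofBijective C hCbij with hCe
  refine ⟨⇑Ce.symm, ⟨σ, hσbij, fun t => C (σ t), hCbij.comp hσbij, ?_⟩, ?_⟩
  · intro t
    have hmod : (⟨t.val % n, Nat.mod_lt _ hn⟩ : Fin n) = t :=
      Fin.ext (Nat.mod_eq_of_lt t.isLt)
    rw [hmod]
    constructor
    · exact Ce.symm_apply_apply (σ t)
    · intro g hg
      have hgL : Ce.symm g ∈ L.drop t.val := by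
        by_contra hnotmem
        have hmem1 : Ce.symm g ∈ L := hmemL _
        rw [← List.take_append_drop t.val L] at hmem1
        rcases List.mem_append.mp hmem1 with h | h
        · obtain ⟨s, hs, hsg⟩ := List.mem_iff_getElem.mp h
          have hst : s < t.val := by
            have := hs
            rw [List.length_take] at this
            omega
          have hsn : s < n := by omega
          have hLs : L[s]'(by omega) = Ce.symm g := by
            rw [← hsg]; exact (List.getElem_take).symm
          have hcontra := hg ⟨s, hsn⟩ (by exact hst)
          apply hcontra
          show C (σ ⟨s, hsn⟩) = g
          have : σ ⟨s, hsn⟩ = Ce.symm g := hLs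
          rw [this]
          exact Ce.apply_symm_apply g
        · exact hnotmem h
      have hineq := hgr t.val (by omega) (Ce.symm g) hgL
      have hCg : C (Ce.symm g) = g := Ce.apply_symm_apply g
      rw [hCg] at hineq
      exact hineq
  · intro i
    have h1 : util u A i = u i (Ae.symm i) := util_equiv u Ae i
    have h2 : util u (⇑Ce.symm) i = u i (C i) := by
      have h3 := util_equiv u Ce.symm i
      rwa [Equiv.symm_symm] at h3
    rw [h1, h2]
    exact hCdom i
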